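/- Let b ∈ ℝ with b ≠ 0, c > 0, x0 ≥ 0, and let q be a natural number with q ≥ 1. Let f : ℝ → ℝ be a measurable probability density supported on [x0, ∞) (f ≥ 0 and ∫_{x0}^∞ f = 1) such that f·ln f is integrable on [x0, ∞), ∫_{x0}^∞ f(x)·ln((x-x0)/c) dx = -H_{q-1}/b, and ∫_{x0}^∞ f(x)·ln(1 + ((x-x0)/c)^b) dx = 1/q, where H_{q-1} = Σ_{k=1}^{q-1} 1/k. Then -∫_{x0}^∞ f(x)·ln(f(x)) dx ≤ -ln(|b|q/c) + ((b-1)/b)·H_{q-1} + (q+1)/q, i.e. the IF1 distribution maximizes differential entropy under these constraints. -/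

import Mathlib

open MeasureTheory Real Set

private lemma shift_int_eq (x0 a : ℝ) (h : ℝ → ℝ) :
    ∫ x in Ioi (a + x0), h x = ∫ y in Ioi a, h (y + x0) := by
  have := (measurePreserving_add_right volume x0).setIntegral_preimage_emb
    (MeasurableEquiv.addRight x0).measurableEmbedding h (Ioi (a + x0))
  rw [show ((fun y => y + x0) ⁻¹' Ioi (a + x0)) = Ioi a from by ext y; simp] at this
  exact this.symm

private lemma shift_intOn (x0 a : ℝ) (h : ℝ → ℝ) :
    IntegrableOn (fun y => h (y + x0)) (Ioi a) ↔ IntegrableOn h (Ioi (a + x0)) := by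
  have := (measurePreserving_add_right volume x0).integrableOn_comp_preimage
    (f := h) (s := Ioi (a + x0)) (MeasurableEquiv.addRight x0).measurableEmbedding
  rw [show ((fun y => y + x0) ⁻¹' Ioi (a + x0)) = Ioi a from by ext y; simp] at this
  exact this

section chain

private noncomputable def psi (q : ℕ) : ℝ → ℝ := fun u => (1 + u) ^ (-((q:ℝ) + 1))

private lemma psi_eq (q : ℕ) : (fun y : ℝ => (y + 1) ^ (-((q:ℝ) + 1))) = psi q := by
  funext u; rw [psi, add_comm]

private lemma psi_int {q : ℕ} (hq : 1 ≤ q) : IntegrableOn (psi q) (Ioi 0) := by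
  have hqR : (1:ℝ) ≤ q := by exact_mod_cast hq
  have h1 : IntegrableOn (fun v : ℝ => v ^ (-((q:ℝ) + 1))) (Ioi 1) :=
    integrableOn_Ioi_rpow_of_lt (by linarith) one_pos
  rw [← psi_eq]
  exact (shift_intOn 1 0 (fun v : ℝ => v ^ (-((q:ℝ) + 1)))).mpr (by rwa [zero_add])

private lemma psi_integral {q : ℕ} (hq : 1 ≤ q) : ∫ u in Ioi 0, psi q u = 1 / (q : ℝ) := by
  have hqR : (1:ℝ) ≤ q := by exact_mod_cast hq
  have h1 : ∫ v in Ioi (1:ℝ), v ^ (-((q:ℝ) + 1)) = 1 / (q : ℝ) := by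
    rw [integral_Ioi_rpow_of_lt (by linarith) one_pos, one_rpow]
    have hq0 : (q:ℝ) ≠ 0 := by linarith
    field_simp
    rw [show -((q:ℝ) + 1) + 1 = -(q:ℝ) by ring, div_neg, neg_neg, div_self hq0]
  have h2 := shift_int_eq 1 0 (fun v : ℝ => v ^ (-((q:ℝ) + 1)))
  rw [zero_add, h1, psi_eq] at h2
  exact h2.symm

end chain

private noncomputable def Phi (b : ℝ) (q : ℕ) : ℝ → ℝ :=
  fun t => (|b| * t ^ (b - 1)) * psi q (t ^ b)

private lemma Phi_int {b : ℝ} {q : ℕ} (hb : b ≠ 0) (hq : 1 ≤ q) :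
    IntegrableOn (Phi b q) (Ioi 0) := by
  have := (integrableOn_Ioi_comp_rpow_iff (psi q) hb).mpr (psi_int hq)
  show IntegrableOn (fun t => (|b| * t ^ (b - 1)) * psi q (t ^ b)) (Ioi 0)
  simpa [Phi, smul_eq_mul] using this

private lemma Phi_integral {b : ℝ} {q : ℕ} (hb : b ≠ 0) (hq : 1 ≤ q) :
    ∫ t in Ioi 0, Phi b q t = 1 / (q : ℝ) := by
  rw [← psi_integral hq, ← integral_comp_rpow_Ioi (psi q) hb]
  simp [Phi, smul_eq_mul]

private lemma scaled_int {b c : ℝ} {q : ℕ} (hb : b ≠ 0) (hc : 0 < c) (hq : 1 ≤ q) :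
    IntegrableOn (fun y => Phi b q (c⁻¹ * y)) (Ioi 0) := by
  have := (integrableOn_Ioi_comp_mul_left_iff (Phi b q) 0 (inv_pos.2 hc)).mpr
  simpa using this (by simpa using Phi_int hb hq)

private lemma scaled_integral {b c : ℝ} {q : ℕ} (hb : b ≠ 0) (hc : 0 < c) (hq : 1 ≤ q) :
    ∫ y in Ioi 0, Phi b q (c⁻¹ * y) = c * (1 / (q : ℝ)) := by
  have h := integral_comp_mul_left_Ioi (Phi b q) 0 (inv_pos.2 hc)
  rw [mul_zero, Phi_integral hb hq] at h
  rw [h, inv_inv, smul_eq_mul]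

private lemma final_int {b c x0 : ℝ} {q : ℕ} (hb : b ≠ 0) (hc : 0 < c) (hq : 1 ≤ q) :
    IntegrableOn (fun x => Phi b q (c⁻¹ * (x - x0))) (Ioi x0) := by
  rw [show Ioi x0 = Ioi (0 + x0) by rw [zero_add]]
  apply (shift_intOn x0 0 (fun x => Phi b q (c⁻¹ * (x - x0)))).mp
  simpa using scaled_int hb hc hq

private lemma final_integral {b c x0 : ℝ} {q : ℕ} (hb : b ≠ 0) (hc : 0 < c) (hq : 1 ≤ q) :
    ∫ x in Ioi x0, Phi b q (c⁻¹ * (x - x0)) = c * (1 / (q : ℝ)) := by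
  have h := shift_int_eq x0 0 (fun x => Phi b q (c⁻¹ * (x - x0)))
  rw [zero_add] at h
  rw [h]
  simpa using scaled_integral hb hc hq

/-- The IF1 distribution maximizes the differential entropy among continuous
distributions supported on `[x0, ∞)` satisfying the two moment constraints. -/
theorem if1_max_entropy (b c x0 : ℝ) (q : ℕ) (hb : b ≠ 0) (hc : 0 < c) (hq : 1 ≤ q)
    (hx0 : 0 ≤ x0) (f : ℝ → ℝ)
    (hf_meas : Measurable f)
    (hf_nonneg : ∀ x, 0 ≤ f x)
    (hf_supp : ∀ x, x < x0 → f x = 0)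
    (hf_prob : ∫ x in Set.Ioi x0, f x = 1)
    (hf_logint : IntegrableOn (fun x => f x * Real.log (f x)) (Set.Ioi x0))
    (hc1_int : IntegrableOn (fun x => f x * Real.log ((x - x0) / c)) (Set.Ioi x0))
    (hc1 : ∫ x in Set.Ioi x0, f x * Real.log ((x - x0) / c) =
      -(∑ k ∈ Finset.range (q - 1), (1 : ℝ) / (k + 1)) / b)
    (hc2_int : IntegrableOn (fun x => f x * Real.log (1 + ((x - x0) / c) ^ b))
      (Set.Ioi x0))
    (hc2 : ∫ x in Set.Ioi x0, f x * Real.log (1 + ((x - x0) / c) ^ b) = 1 / (q : ℝ)) :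
    -∫ x in Set.Ioi x0, f x * Real.log (f x) ≤
      -Real.log (|b| * (q : ℝ) / c) +
        (b - 1) / b * (∑ k ∈ Finset.range (q - 1), (1 : ℝ) / (k + 1)) +
        ((q : ℝ) + 1) / (q : ℝ) := by
  set H : ℝ := ∑ k ∈ Finset.range (q - 1), (1 : ℝ) / (k + 1) with hH
  set K : ℝ := |b| * (q : ℝ) / c with hK
  have hq0 : (0:ℝ) < q := by have : 0 < q := hq; exact_mod_cast this
  have hKpos : 0 < K := by
    have : 0 < |b| := abs_pos.mpr hb
    positivity
  -- f is integrable
  have hf_int : IntegrableOn f (Set.Ioi x0) := by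
    by_contra h
    rw [integral_undef h] at hf_prob
    exact one_ne_zero hf_prob.symm
  -- the IF1 density
  set G : ℝ → ℝ := fun x => ((q:ℝ)/c) * Phi b q (c⁻¹ * (x - x0)) with hG
  have hG_int : IntegrableOn G (Set.Ioi x0) := (final_int hb hc hq).const_mul _
  have hG_integral : ∫ x in Set.Ioi x0, G x = 1 := by
    simp only [hG]
    rw [integral_const_mul, final_integral hb hc hq]
    field_simp
  have hGval : ∀ x ∈ Set.Ioi x0,
      G x = K * ((x - x0)/c) ^ (b-1) * (1 + ((x - x0)/c) ^ b) ^ (-((q:ℝ)+1)) := by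
    intro x hx
    simp only [hG, Phi, psi]
    rw [inv_mul_eq_div, hK]
    ring
  have hGpos : ∀ x ∈ Set.Ioi x0, 0 < G x := by
    intro x hx
    rw [hGval x hx]
    have hs : 0 < (x - x0)/c := div_pos (sub_pos.mpr hx) hc
    have h1 : 0 < ((x - x0)/c) ^ (b-1) := rpow_pos_of_pos hs _
    have h2 : 0 < 1 + ((x - x0)/c) ^ b := by positivity
    positivity
  have hlogG : ∀ x ∈ Set.Ioi x0, Real.log (G x) =
      Real.log K + (b-1) * Real.log ((x - x0)/c)
        - ((q:ℝ)+1) * Real.log (1 + ((x - x0)/c) ^ b) := by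
    intro x hx
    have hs : 0 < (x - x0)/c := div_pos (sub_pos.mpr hx) hc
    have h1 : 0 < ((x - x0)/c) ^ (b-1) := rpow_pos_of_pos hs _
    have h2 : 0 < 1 + ((x - x0)/c) ^ b := by positivity
    rw [hGval x hx, Real.log_mul (by positivity) (by positivity),
      Real.log_mul hKpos.ne' h1.ne', Real.log_rpow hs, Real.log_rpow h2]
    ring
  -- integral of f * log G
  set E : ℝ → ℝ := fun x => f x * Real.log K + (b-1) * (f x * Real.log ((x - x0)/c))
      - ((q:ℝ)+1) * (f x * Real.log (1 + ((x - x0)/c) ^ b)) with hE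
  have hE_int : IntegrableOn E (Set.Ioi x0) :=
    ((hf_int.mul_const _).add (hc1_int.const_mul _)).sub (hc2_int.const_mul _)
  have hE_eq : Set.EqOn E (fun x => f x * Real.log (G x)) (Set.Ioi x0) := by
    intro x hx
    simp only [hE]
    rw [hlogG x hx]
    ring
  have hflogG_int : IntegrableOn (fun x => f x * Real.log (G x)) (Set.Ioi x0) :=
    hE_int.congr_fun hE_eq measurableSet_Ioi
  have hflogG_val : ∫ x in Set.Ioi x0, f x * Real.log (G x) =
      Real.log K + (b-1) * (-H/b) - ((q:ℝ)+1) * (1/(q:ℝ)) := by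
    have hA1 : IntegrableOn (fun x => f x * Real.log K) (Set.Ioi x0) := hf_int.mul_const _
    have hA2 : IntegrableOn (fun x => (b-1) * (f x * Real.log ((x - x0)/c))) (Set.Ioi x0) :=
      hc1_int.const_mul _
    have hA3 : IntegrableOn
        (fun x => ((q:ℝ)+1) * (f x * Real.log (1 + ((x - x0)/c) ^ b))) (Set.Ioi x0) :=
      hc2_int.const_mul _
    have hA12 : IntegrableOn
        (fun x => f x * Real.log K + (b-1) * (f x * Real.log ((x - x0)/c))) (Set.Ioi x0) :=
      hA1.add hA2
    rw [← setIntegral_congr_fun measurableSet_Ioi hE_eq]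
    simp only [hE]
    rw [integral_sub hA12 hA3, integral_add hA1 hA2,
      integral_mul_const, integral_const_mul, integral_const_mul,
      hf_prob, hc1, hc2]
    ring
  -- Gibbs inequality, pointwise
  have key : ∀ x ∈ Set.Ioi x0,
      f x - G x ≤ f x * Real.log (f x) - f x * Real.log (G x) := by
    intro x hx
    rcases (hf_nonneg x).eq_or_lt with h | h
    · rw [← h, zero_mul, zero_mul, zero_sub, sub_zero]
      linarith [hGpos x hx]
    · have hGx := hGpos x hx
      have hlog := Real.log_le_sub_one_of_pos (div_pos hGx h)
      rw [Real.log_div hGx.ne' h.ne'] at hlog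
      have h2 := mul_le_mul_of_nonneg_left hlog h.le
      have h3 : f x * (G x / f x) = G x := by field_simp
      rw [mul_sub] at h2
      rw [mul_sub, h3] at h2
      linarith
  -- integrate the inequality
  have hmono := setIntegral_mono_on (hf_int.sub hG_int) (hf_logint.sub hflogG_int)
    measurableSet_Ioi key
  simp only [Pi.sub_apply] at hmono
  rw [integral_sub hf_int hG_int, integral_sub hf_logint hflogG_int,
    hf_prob, hG_integral, hflogG_val] at hmono
  have harith : -(Real.log K + (b-1) * (-H/b) - ((q:ℝ)+1) * (1/(q:ℝ))) =
      -Real.log K + (b-1)/b * H + ((q:ℝ)+1)/(q:ℝ) := by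
    field_simp
    ring
  linarith [hmono, harith.le, harith.ge]
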